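/- Let A₁,…,A_k be invertible 3×3 rational matrices and let B be the 3×3 matrix with (B)_{1,1} = 1 and all other entries 0. Then the family {A₁,…,A_k, B} is mortal, i.e., there exists a nonempty finite sequence of matrices from {A₁,…,A_k,B} whose product is the zero matrix, if and only if there exists a nonempty finite index sequence i₁,…,i_n ∈ {1,…,k} with (A_{i₁}·A_{i₂}⋯A_{i_n})_{1,1} = 0. -/

import Mathlib

/-- The rank-one matrix `B` with a single `1` in the upper-left corner. -/
def Bmat : Matrix (Fin 3) (Fin 3) ℚ :=
  !![1, 0, 0;
     0, 0, 0;
     0, 0, 0]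

lemma BMB (M : Matrix (Fin 3) (Fin 3) ℚ) : Bmat * M * Bmat = M 0 0 • Bmat := by
  ext i j
  fin_cases i <;> fin_cases j <;>
    simp [Bmat, Matrix.mul_apply, Fin.sum_univ_three, Matrix.vecMul, Matrix.vecHead,
      Matrix.vecTail, dotProduct]

lemma Bmat_ne_zero : Bmat ≠ 0 := by
  intro h
  have := congrFun (congrFun h 0) 0
  simp [Bmat] at this

lemma prodA_isUnit {k : ℕ} (A : Fin k → Matrix (Fin 3) (Fin 3) ℚ)
    (hA : ∀ i, IsUnit (A i)) (la : List (Fin k)) :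
    IsUnit ((la.map A).prod) := by
  induction la with
  | nil => simp
  | cons i t ih => simpa using (hA i).mul ih

lemma normal_form {k : ℕ} (A : Fin k → Matrix (Fin 3) (Fin 3) ℚ)
    (hne : ∀ la : List (Fin k), ((la.map A).prod) 0 0 ≠ 0)
    (L : List (Matrix (Fin 3) (Fin 3) ℚ))
    (hL : ∀ X ∈ L, (∃ i, X = A i) ∨ X = Bmat) :
    (∃ la : List (Fin k), L.prod = (la.map A).prod) ∨
    (∃ c : ℚ, c ≠ 0 ∧ ∃ la lb : List (Fin k),
      L.prod = c • ((la.map A).prod * Bmat * (lb.map A).prod)) := by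
  induction L with
  | nil => exact Or.inl ⟨[], by simp⟩
  | cons M T ih =>
    have hM := hL M (by simp)
    have ih' := ih (fun X hX => hL X (by simp [hX]))
    rcases hM with ⟨i, rfl⟩ | rfl
    · rcases ih' with ⟨la, h⟩ | ⟨c, hc, la, lb, h⟩
      · exact Or.inl ⟨i :: la, by simp [h]⟩
      · refine Or.inr ⟨c, hc, i :: la, lb, ?_⟩
        simp only [List.prod_cons, h, List.map_cons]
        rw [mul_smul_comm]
        simp only [mul_assoc]
    · rcases ih' with ⟨la, h⟩ | ⟨c, hc, la, lb, h⟩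
      · refine Or.inr ⟨1, one_ne_zero, [], la, ?_⟩
        simp [h]
      · refine Or.inr ⟨c * ((la.map A).prod 0 0), mul_ne_zero hc (hne la), [], lb, ?_⟩
        simp only [List.prod_cons, h, List.map_nil, List.prod_nil, one_mul]
        rw [mul_smul_comm, ← mul_assoc, ← mul_assoc, BMB, Matrix.smul_mul, smul_smul]

theorem mortal_iff_zulc {k : ℕ} (A : Fin k → Matrix (Fin 3) (Fin 3) ℚ)
    (hA : ∀ i, IsUnit (A i)) :
    (∃ (n : ℕ), 1 ≤ n ∧ ∃ M : Fin n → Matrix (Fin 3) (Fin 3) ℚ,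
      (∀ j : Fin n, (∃ i, M j = A i) ∨ M j = Bmat) ∧ (List.ofFn M).prod = 0) ↔
    (∃ (n : ℕ), 1 ≤ n ∧ ∃ idx : Fin n → Fin k,
      (List.ofFn fun j => A (idx j)).prod 0 0 = 0) := by
  constructor
  · rintro ⟨n, hn, M, hM, hprod⟩
    by_contra hcon
    push_neg at hcon
    -- derive: every A-product has nonzero (0,0) entry
    have hne : ∀ la : List (Fin k), ((la.map A).prod) 0 0 ≠ 0 := by
      intro la
      rcases la.eq_nil_or_concat with rfl | _
      · simp [Matrix.one_apply]
      · intro h0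
        have hlen : 1 ≤ la.length := by
          rcases la with _ | ⟨a, t⟩
          · simp [Matrix.one_apply] at h0
          · simp
        refine hcon la.length hlen la.get ?_
        have : (List.ofFn fun j => A (la.get j)) = la.map A := by
          rw [show (fun j => A (la.get j)) = A ∘ la.get from rfl,
            ← List.map_ofFn, List.ofFn_get]
        rw [this]
        exact h0
    have hmem : ∀ X ∈ List.ofFn M, (∃ i, X = A i) ∨ X = Bmat := by
      intro X hX
      rw [List.mem_ofFn] at hX
      rcases hX with ⟨j, rfl⟩
      exact hM j
    rcases normal_form A hne (List.ofFn M) hmem with ⟨la, h⟩ | ⟨c, hc, la, lb, h⟩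
    · rw [hprod] at h
      exact (prodA_isUnit A hA la).ne_zero h.symm
    · rw [hprod] at h
      have h2 : (la.map A).prod * Bmat * (lb.map A).prod = 0 :=
        (smul_eq_zero.mp h.symm).resolve_left hc
      have hu := prodA_isUnit A hA la
      have hv := prodA_isUnit A hA lb
      apply Bmat_ne_zero
      have h3 : (la.map A).prod * Bmat = 0 := (hv.mul_left_eq_zero).mp h2
      exact (hu.mul_right_eq_zero).mp h3
  · rintro ⟨n, hn, idx, h0⟩
    set P := (List.ofFn fun j => A (idx j)) with hP
    set L := Bmat :: (P ++ [Bmat]) with hLdef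
    have hLprod : L.prod = 0 := by
      simp only [hLdef, List.prod_cons, List.prod_append, List.prod_cons, List.prod_nil,
        mul_one]
      rw [← mul_assoc, BMB, h0, zero_smul]
    have hmemL : ∀ X ∈ L, (∃ i, X = A i) ∨ X = Bmat := by
      intro X hX
      rw [hLdef] at hX
      rcases List.mem_cons.mp hX with h | h
      · exact Or.inr h
      rcases List.mem_append.mp h with h | h
      · rw [hP, List.mem_ofFn] at h
        rcases h with ⟨y, hy⟩
        exact Or.inl ⟨idx y, hy.symm⟩
      · simp at h
        exact Or.inr h
    refine ⟨L.length, ?_, L.get, ?_, ?_⟩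
    · simp [hLdef]
    · intro j
      exact hmemL _ (L.get_mem j)
    · rw [List.ofFn_get]
      exact hLprod
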